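/- arXiv:1907.12734 — 4 statements merged into one kernel-verified Lean document; each statement's English description precedes it below -/
import Mathlib

section
/- Any two distinct vertices of the Farey graph have at most two common neighbors. Equivalently: if (p,q) and (r,s) are coprime integer pairs with (r,s) ≠ ±(p,q), then the set of vertices [a,b] of the Farey graph satisfying |a·q − b·p| = 1 and |a·s − b·r| = 1 has cardinality at most 2. In particular, between any two vertices of the Farey graph at distance 2 there are at most two geodesics of length 2. -/
/-- A Farey pair: a pair of coprime integers. -/
abbrev FareyPair : Type := {v : ℤ × ℤ // IsCoprime v.1 v.2}

/-- Identify a coprime pair of integers with its negative. -/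
instance fareySetoid : Setoid FareyPair where
  r a b := a.1 = b.1 ∨ a.1 = -b.1
  iseqv := by
    refine ⟨fun a => Or.inl rfl, ?_, ?_⟩
    · rintro a b (h | h)
      · exact Or.inl h.symm
      · exact Or.inr (by rw [h, neg_neg])
    · rintro a b c (h1 | h1) (h2 | h2)
      · exact Or.inl (h1.trans h2)
      · exact Or.inr (h1.trans h2)
      · exact Or.inr (by rw [h1, h2])
      · exact Or.inl (by rw [h1, h2, neg_neg])

/-- Vertices of the Farey graph: coprime integer pairs up to sign. -/
abbrev FareyVertex : Type := Quotient fareySetoid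

/-- The Farey vertex `[p, q]` determined by a coprime pair `(p, q)`. -/
def fareyMk (p q : ℤ) (h : IsCoprime p q) : FareyVertex :=
  Quotient.mk fareySetoid ⟨(p, q), h⟩

/-- The absolute value of the determinant, descended to Farey vertices. -/
def fareyDetAbs : FareyVertex → FareyVertex → ℤ :=
  Quotient.lift₂ (fun a b : FareyPair => |a.1.1 * b.1.2 - a.1.2 * b.1.1|)
    (by
      rintro a b a' b' (h1 | h1) (h2 | h2)
      · simp only [h1, h2]
      · simp only [h1, h2, Prod.fst_neg, Prod.snd_neg]
        apply abs_eq_abs.mpr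
        right; ring
      · simp only [h1, h2, Prod.fst_neg, Prod.snd_neg]
        apply abs_eq_abs.mpr
        right; ring
      · simp only [h1, h2, Prod.fst_neg, Prod.snd_neg]
        apply abs_eq_abs.mpr
        left; ring)

lemma fareyDetAbs_comm (u v : FareyVertex) : fareyDetAbs u v = fareyDetAbs v u := by
  refine Quotient.inductionOn₂ u v fun a b => ?_
  show |a.1.1 * b.1.2 - a.1.2 * b.1.1| = |b.1.1 * a.1.2 - b.1.2 * a.1.1|
  rw [abs_sub_comm]
  exact congrArg abs (by ring)

/-- The Farey graph: coprime integer pairs up to sign, adjacent when the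
determinant is `±1`. -/
def FareyGraph : SimpleGraph FareyVertex where
  Adj u v := fareyDetAbs u v = 1
  symm := by
    constructor
    intro u v h
    rwa [fareyDetAbs_comm]
  loopless := by
    constructor
    intro u
    refine Quotient.inductionOn u fun a => ?_
    show ¬(|a.1.1 * a.1.2 - a.1.2 * a.1.1| = 1)
    rw [show a.1.1 * a.1.2 - a.1.2 * a.1.1 = 0 from by ring]
    simp

/-- A pair of integers forming a unimodular matrix with another pair is coprime. -/
lemma coprime_of_det (a b c d : ℤ) (h : |a * d - b * c| = 1) : IsCoprime a b := by
  rcases (abs_eq (by norm_num : (0:ℤ) ≤ 1)).mp h with h' | h'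
  · exact ⟨d, -c, by linear_combination h'⟩
  · exact ⟨-d, c, by linear_combination -h'⟩

/-- Auxiliary: solving a nonsingular linear system. -/
lemma farey_solve (p q r s a b a' b' : ℤ) (hD : p * s - q * r ≠ 0)
    (h1 : p * b - q * a = p * b' - q * a') (h2 : r * b - s * a = r * b' - s * a') :
    a = a' ∧ b = b' := by
  have ha : (p * s - q * r) * (a - a') = 0 := by linear_combination r * h1 - p * h2
  have hb : (p * s - q * r) * (b - b') = 0 := by linear_combination s * h1 - q * h2
  constructor
  · have := (mul_eq_zero.mp ha).resolve_left hD
    linarith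
  · have := (mul_eq_zero.mp hb).resolve_left hD
    linarith

lemma farey_key (p q r s a b a' b' : ℤ) (hD : p * s - q * r ≠ 0)
    (h1 : |p * b - q * a| = 1)
    (h3 : |p * b' - q * a'| = 1)
    (hf : (p * b - q * a) * (r * b - s * a) = (p * b' - q * a') * (r * b' - s * a')) :
    (a = a' ∧ b = b') ∨ (a = -a' ∧ b = -b') := by
  have hx0 : p * b - q * a ≠ 0 := by
    intro h; rw [h] at h1; simp at h1
  rcases abs_eq_abs.mp (h1.trans h3.symm) with hx | hx
  · left
    have hy : r * b - s * a = r * b' - s * a' := by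
      have := hf
      rw [hx] at this
      exact mul_left_cancel₀ (hx ▸ hx0) this
    exact farey_solve p q r s a b a' b' hD hx hy
  · right
    have hy : r * b - s * a = -(r * b' - s * a') := by
      have h' : (p * b' - q * a') * (r * b - s * a)
          = (p * b' - q * a') * (-(r * b' - s * a')) := by linear_combination -hf + (r*b - s*a) * hx
    -- (p*b-q*a) = -(p*b'-q*a')
      have hx0' : p * b' - q * a' ≠ 0 := by
        intro h; rw [h] at h3; simp at h3
      exact mul_left_cancel₀ hx0' h'
    have e1 : p * b - q * a = p * (-b') - q * (-a') := by linear_combination hx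
    have e2 : r * b - s * a = r * (-b') - s * (-a') := by linear_combination hy
    exact farey_solve p q r s a b (-a') (-b') hD e1 e2

/-- Product of the two determinants, descended to Farey vertices. -/
def fareyProd (p q r s : ℤ) : FareyVertex → ℤ :=
  Quotient.lift (fun w : FareyPair =>
    (p * w.1.2 - q * w.1.1) * (r * w.1.2 - s * w.1.1))
    (by
      rintro a c (h | h) <;> simp only [h, Prod.fst_neg, Prod.snd_neg] <;> ring)

/-- Any two distinct vertices of the Farey graph have at most two
common neighbors. -/
theorem farey_common_neighbors_le_two (u v : FareyVertex) (huv : u ≠ v) :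
    {w : FareyVertex | FareyGraph.Adj u w ∧ FareyGraph.Adj v w}.encard ≤ 2 := by
  revert huv
  refine Quotient.inductionOn₂ u v fun up vp => ?_
  obtain ⟨⟨p, q⟩, hpq⟩ := up
  obtain ⟨⟨r, s⟩, hrs⟩ := vp
  intro huv
  have hD : p * s - q * r ≠ 0 := by
    intro h0
    apply huv
    obtain ⟨e, f, hef⟩ := hpq
    set t : ℤ := e * r + f * s with ht
    have hr : r = p * t := by linear_combination (-r) * hef + (-f) * h0
    have hs : s = q * t := by linear_combination (-s) * hef + e * h0
    obtain ⟨e', f', hef'⟩ := hrs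
    have hunit : t * (e' * p + f' * q) = 1 := by
      linear_combination hef' - e' * hr - f' * hs
    rcases Int.isUnit_iff.mp (IsUnit.of_mul_eq_one (a := t) _ hunit) with h1 | h1
    · exact Quotient.sound (Or.inl (by simp [Prod.ext_iff, hr, hs, h1]))
    · exact Quotient.sound (Or.inr (by simp [Prod.ext_iff, hr, hs, h1]))
  set S := {w : FareyVertex |
    FareyGraph.Adj (Quotient.mk fareySetoid ⟨(p, q), hpq⟩) w ∧
    FareyGraph.Adj (Quotient.mk fareySetoid ⟨(r, s), hrs⟩) w} with hS
  have hinj : Set.InjOn (fareyProd p q r s) S := by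
    intro w1 hw1 w2 hw2 hfw
    revert hw1 hw2 hfw
    refine Quotient.inductionOn₂ w1 w2 fun A B hw1 hw2 hfw => ?_
    obtain ⟨⟨a, b⟩, hab⟩ := A
    obtain ⟨⟨a', b'⟩, hab'⟩ := B
    have h1 : |p * b - q * a| = 1 := hw1.1
    have h3 : |p * b' - q * a'| = 1 := hw2.1
    have hf : (p * b - q * a) * (r * b - s * a)
        = (p * b' - q * a') * (r * b' - s * a') := hfw
    rcases farey_key p q r s a b a' b' hD h1 h3 hf with ⟨ha, hb⟩ | ⟨ha, hb⟩
    · exact Quotient.sound (Or.inl (by simp [Prod.ext_iff, ha, hb]))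
    · exact Quotient.sound (Or.inr (by simp [Prod.ext_iff, ha, hb]))
  have himg : (fareyProd p q r s) '' S ⊆ ({1, -1} : Set ℤ) := by
    rintro x ⟨w, hw, rfl⟩
    revert hw
    refine Quotient.inductionOn w fun A hw => ?_
    obtain ⟨⟨a, b⟩, hab⟩ := A
    have h1 : |p * b - q * a| = 1 := hw.1
    have h2 : |r * b - s * a| = 1 := hw.2
    have : |(p * b - q * a) * (r * b - s * a)| = 1 := by rw [abs_mul, h1, h2]; ring
    rcases (abs_eq (by norm_num : (0:ℤ) ≤ 1)).mp this with h | h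
    · exact Or.inl h
    · exact Or.inr h
  calc S.encard = ((fareyProd p q r s) '' S).encard := (hinj.encard_image).symm
    _ ≤ ({1, -1} : Set ℤ).encard := Set.encard_le_encard himg
    _ = 2 := Set.encard_pair (by norm_num)
end

section
/- Let (p,q) and (r,s) be coprime integer pairs determining non-adjacent, distinct vertices [p,q] and [r,s] of the Farey graph (that is, |p·s − q·r| ≥ 2). Then [p,q] and [r,s] have exactly two common neighbors in the Farey graph if and only if |p·s − q·r| = 2. -/
private lemma farey_half_abs {x m : ℤ} (h : 2 * x = m) (hm : |m| = 2) : |x| = 1 := by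
  have h' := (abs_eq (by norm_num : (0:ℤ) ≤ 2)).mp hm
  have : x = 1 ∨ x = -1 := by omega
  rcases this with rfl | rfl <;> norm_num

private lemma farey_core (p q r s a b c d : ℤ) (hn : p * s - q * r ≠ 0)
    (h1 : |p * b - q * a| = 1) (h2 : |r * b - s * a| = 1)
    (h3 : |p * d - q * c| = 1) (h4 : |r * d - s * c| = 1) :
    ((p * s - q * r) ∣ 2 * p ∧ (p * s - q * r) ∣ 2 * q) ∨
      (a = c ∧ b = d) ∨ (a = -c ∧ b = -d) := by
  rcases (abs_eq (by norm_num : (0:ℤ) ≤ 1)).mp h1 with h1 | h1 <;>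
  rcases (abs_eq (by norm_num : (0:ℤ) ≤ 1)).mp h2 with h2 | h2 <;>
  rcases (abs_eq (by norm_num : (0:ℤ) ≤ 1)).mp h3 with h3 | h3 <;>
  rcases (abs_eq (by norm_num : (0:ℤ) ≤ 1)).mp h4 with h4 | h4 <;>
  first
  | exact Or.inr (Or.inl ⟨mul_left_cancel₀ hn (by linear_combination r*h1 - p*h2 - r*h3 + p*h4),
      mul_left_cancel₀ hn (by linear_combination s*h1 - q*h2 - s*h3 + q*h4)⟩)
  | exact Or.inr (Or.inr ⟨mul_left_cancel₀ hn (by linear_combination r*h1 - p*h2 + r*h3 - p*h4),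
      mul_left_cancel₀ hn (by linear_combination s*h1 - q*h2 + s*h3 - q*h4)⟩)
  | refine Or.inl ⟨?_, ?_⟩ <;>
    first
    | exact ⟨a - c, by linear_combination -r*h1 + p*h2 + r*h3 - p*h4⟩
    | exact ⟨c - a, by linear_combination r*h1 - p*h2 - r*h3 + p*h4⟩
    | exact ⟨a + c, by linear_combination -r*h1 + p*h2 - r*h3 + p*h4⟩
    | exact ⟨-a - c, by linear_combination r*h1 - p*h2 + r*h3 - p*h4⟩
    | exact ⟨b - d, by linear_combination -s*h1 + q*h2 + s*h3 - q*h4⟩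
    | exact ⟨d - b, by linear_combination s*h1 - q*h2 - s*h3 + q*h4⟩
    | exact ⟨b + d, by linear_combination -s*h1 + q*h2 - s*h3 + q*h4⟩
    | exact ⟨-b - d, by linear_combination s*h1 - q*h2 + s*h3 - q*h4⟩

private lemma farey_parity (p q r s : ℤ) (hpq : IsCoprime p q) (hrs : IsCoprime r s)
    (hd : (2:ℤ) ∣ p * s - q * r) : (2:ℤ) ∣ r - p ∧ (2:ℤ) ∣ s - q := by
  have hpq' : ¬((p : ZMod 2) = 0 ∧ (q : ZMod 2) = 0) := by
    rintro ⟨h1, h2⟩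
    rw [ZMod.intCast_zmod_eq_zero_iff_dvd] at h1 h2
    have h1' : (2:ℤ) ∣ p := by exact_mod_cast h1
    have h2' : (2:ℤ) ∣ q := by exact_mod_cast h2
    exact (by decide : ¬IsUnit (2:ℤ)) (hpq.isUnit_of_dvd' h1' h2')
  have hrs' : ¬((r : ZMod 2) = 0 ∧ (s : ZMod 2) = 0) := by
    rintro ⟨h1, h2⟩
    rw [ZMod.intCast_zmod_eq_zero_iff_dvd] at h1 h2
    have h1' : (2:ℤ) ∣ r := by exact_mod_cast h1
    have h2' : (2:ℤ) ∣ s := by exact_mod_cast h2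
    exact (by decide : ¬IsUnit (2:ℤ)) (hrs.isUnit_of_dvd' h1' h2')
  have hd' : ((p * s - q * r : ℤ) : ZMod 2) = 0 :=
    (ZMod.intCast_zmod_eq_zero_iff_dvd _ _).mpr hd
  push_cast at hd'
  have gen : ∀ P Q R S : ZMod 2, ¬(P = 0 ∧ Q = 0) → ¬(R = 0 ∧ S = 0) →
      P * S - Q * R = 0 → R = P ∧ S = Q := by decide
  have key := gen _ _ _ _ hpq' hrs' hd'
  constructor
  · exact Int.ModEq.dvd ((ZMod.intCast_eq_intCast_iff _ _ _).mp key.1).symm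
  · exact Int.ModEq.dvd ((ZMod.intCast_eq_intCast_iff _ _ _).mp key.2).symm

/-- If `(p,q)` and `(r,s)` are coprime pairs with `|ps - qr| ≥ 2`
(so `[p,q]` and `[r,s]` are distinct and non-adjacent in the Farey graph), then
`[p,q]` and `[r,s]` have exactly two common neighbors iff `|ps - qr| = 2`. -/
theorem farey_two_common_neighbors_iff (p q r s : ℤ)
    (hpq : IsCoprime p q) (hrs : IsCoprime r s) (h : 2 ≤ |p * s - q * r|) :
    {w : FareyVertex | FareyGraph.Adj (fareyMk p q hpq) w ∧
        FareyGraph.Adj (fareyMk r s hrs) w}.encard = 2 ↔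
      |p * s - q * r| = 2 := by
  constructor
  · -- forward direction
    intro hcard
    obtain ⟨x, y, hxy, hS⟩ := Set.encard_eq_two.mp hcard
    have hx : x ∈ {w : FareyVertex | FareyGraph.Adj (fareyMk p q hpq) w ∧
        FareyGraph.Adj (fareyMk r s hrs) w} := by rw [hS]; exact Set.mem_insert _ _
    have hy : y ∈ {w : FareyVertex | FareyGraph.Adj (fareyMk p q hpq) w ∧
        FareyGraph.Adj (fareyMk r s hrs) w} := by
      rw [hS]; exact Set.mem_insert_of_mem _ rfl
    obtain ⟨⟨⟨a, b⟩, hab⟩, rfl⟩ := Quotient.exists_rep x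
    obtain ⟨⟨⟨c, d⟩, hcd⟩, rfl⟩ := Quotient.exists_rep y
    have h1 : |p * b - q * a| = 1 := hx.1
    have h2 : |r * b - s * a| = 1 := hx.2
    have h3 : |p * d - q * c| = 1 := hy.1
    have h4 : |r * d - s * c| = 1 := hy.2
    have hn0 : p * s - q * r ≠ 0 := by
      intro h0; rw [h0] at h; norm_num at h
    rcases farey_core p q r s a b c d hn0 h1 h2 h3 h4 with ⟨hdp, hdq⟩ | heq | heq
    · obtain ⟨u, v, huv⟩ := hpq
      have hd2 : (p * s - q * r) ∣ 2 := by
        have hsum := dvd_add (hdp.mul_left u) (hdq.mul_left v)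
        rwa [show u * (2 * p) + v * (2 * q) = 2 * (u * p + v * q) from by ring, huv,
          mul_one] at hsum
      have hle : |p * s - q * r| ≤ 2 := Int.le_of_dvd (by norm_num) ((abs_dvd _ _).mpr hd2)
      linarith
    · exact absurd (Quotient.sound (Or.inl
        (show ((a, b) : ℤ × ℤ) = (c, d) by rw [heq.1, heq.2]))) hxy
    · exact absurd (Quotient.sound (Or.inr
        (show ((a, b) : ℤ × ℤ) = -(c, d) by rw [Prod.neg_mk, heq.1, heq.2]))) hxy
  · -- backward direction
    intro habs
    have hn2 : p * s - q * r = 2 ∨ p * s - q * r = -2 :=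
      (abs_eq (by norm_num : (0:ℤ) ≤ 2)).mp habs
    obtain ⟨hrp, hsq⟩ := farey_parity p q r s hpq hrs
      (by rcases hn2 with hn | hn <;> rw [hn] <;> norm_num)
    obtain ⟨a1, ha1⟩ := hrp
    obtain ⟨b1, hb1⟩ := hsq
    have key1 : 2 * (p * b1 - q * a1) = p * s - q * r := by
      linear_combination -p * hb1 + q * ha1
    have key2 : 2 * (r * b1 - s * a1) = p * s - q * r := by
      linear_combination -r * hb1 + s * ha1
    have key3 : 2 * (p * (b1 + q) - q * (a1 + p)) = p * s - q * r := by
      linear_combination -p * hb1 + q * ha1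
    have key4 : 2 * (r * (b1 + q) - s * (a1 + p)) = -(p * s - q * r) := by
      linear_combination -r * hb1 + s * ha1
    have habsneg : |-(p * s - q * r)| = 2 := by rw [abs_neg]; exact habs
    have habs1 : |p * b1 - q * a1| = 1 := farey_half_abs key1 habs
    have habs2 : |r * b1 - s * a1| = 1 := farey_half_abs key2 habs
    have habs3 : |p * (b1 + q) - q * (a1 + p)| = 1 := farey_half_abs key3 habs
    have habs4 : |r * (b1 + q) - s * (a1 + p)| = 1 := farey_half_abs key4 habsneg
    have hco1 : IsCoprime a1 b1 := coprime_of_det a1 b1 p q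
      (by rw [show a1 * q - b1 * p = -(p * b1 - q * a1) from by ring, abs_neg]; exact habs1)
    have hco2 : IsCoprime (a1 + p) (b1 + q) := coprime_of_det (a1 + p) (b1 + q) p q
      (by rw [show (a1 + p) * q - (b1 + q) * p = -(p * (b1 + q) - q * (a1 + p)) from by ring,
        abs_neg]; exact habs3)
    set w1 : FareyVertex := Quotient.mk fareySetoid ⟨(a1, b1), hco1⟩ with hw1
    set w2 : FareyVertex := Quotient.mk fareySetoid ⟨(a1 + p, b1 + q), hco2⟩ with hw2
    have hne : w1 ≠ w2 := by
      intro heq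
      rcases Quotient.exact heq with hr | hr
      · have e1 : a1 = a1 + p := congrArg Prod.fst hr
        have e2 : b1 = b1 + q := congrArg Prod.snd hr
        obtain rfl : p = 0 := by omega
        obtain rfl : q = 0 := by omega
        exact not_isCoprime_zero_zero hpq
      · have e1 : a1 = -(a1 + p) := congrArg Prod.fst hr
        have e2 : b1 = -(b1 + q) := congrArg Prod.snd hr
        obtain rfl : r = 0 := by omega
        obtain rfl : s = 0 := by omega
        exact not_isCoprime_zero_zero hrs
    have hSetEq : {w : FareyVertex | FareyGraph.Adj (fareyMk p q hpq) w ∧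
        FareyGraph.Adj (fareyMk r s hrs) w} = {w1, w2} := by
      apply Set.eq_of_subset_of_subset
      · intro w hw
        induction w using Quotient.inductionOn with
        | h z =>
          obtain ⟨⟨a, b⟩, hab⟩ := z
          have h1 : |p * b - q * a| = 1 := hw.1
          have h2 : |r * b - s * a| = 1 := hw.2
          have master_a : (p * s - q * r) * a = r * (p * b - q * a) - p * (r * b - s * a) := by
            ring
          have master_b : (p * s - q * r) * b = s * (p * b - q * a) - q * (r * b - s * a) := by
            ring
          simp only [Set.mem_insert_iff, Set.mem_singleton_iff]
          rcases hn2 with hn | hn <;>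
          rcases (abs_eq (by norm_num : (0:ℤ) ≤ 1)).mp h1 with h1' | h1' <;>
          rcases (abs_eq (by norm_num : (0:ℤ) ≤ 1)).mp h2 with h2' | h2' <;>
          rw [hn, h1', h2'] at master_a master_b <;>
          first
          | exact Or.inl (Quotient.sound (Or.inl
              (show ((a, b) : ℤ × ℤ) = (a1, b1) by rw [Prod.mk.injEq]; omega)))
          | exact Or.inl (Quotient.sound (Or.inr
              (show ((a, b) : ℤ × ℤ) = -(a1, b1) by rw [Prod.neg_mk, Prod.mk.injEq]; omega)))
          | exact Or.inr (Quotient.sound (Or.inl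
              (show ((a, b) : ℤ × ℤ) = (a1 + p, b1 + q) by rw [Prod.mk.injEq]; omega)))
          | exact Or.inr (Quotient.sound (Or.inr
              (show ((a, b) : ℤ × ℤ) = -(a1 + p, b1 + q) by
                rw [Prod.neg_mk, Prod.mk.injEq]; omega)))
      · rintro w (rfl | rfl)
        · exact ⟨habs1, habs2⟩
        · exact ⟨habs3, habs4⟩
    rw [hSetEq]
    exact Set.encard_pair hne
end

section
/- Let (p,q) and (r,s) be coprime integer pairs with |p·s − q·r| = 2. Then p+r and q+s are both even, p−r and q−s are both even, the integer pairs ((p+r)/2, (q+s)/2) and ((p−r)/2, (q−s)/2) are each coprime, and the common neighbors of [p,q] and [r,s] in the Farey graph are exactly the two vertices [(p+r)/2, (q+s)/2] and [(p−r)/2, (q−s)/2]; moreover these two vertices are adjacent to each other. -/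
lemma cramer_aux (A B C D x y α : ℤ) (he : (A*D - B*C)*(A*D - B*C) = 1)
    (h1 : A*y - B*x = α) (h2 : C*y - D*x = 0) :
    x = (A*D - B*C)*α*C ∧ y = (A*D - B*C)*α*D := by
  constructor
  · linear_combination (-x)*he + (A*D-B*C)*C*h1 - (A*D-B*C)*A*h2
  · linear_combination (-y)*he + (A*D-B*C)*D*h1 - (A*D-B*C)*B*h2

/-- If `(p,q)` and `(r,s)` are coprime pairs with `|ps - qr| = 2`,
then `p+r, q+s, p-r, q-s` are all even, the halved pairs are coprime, the common
neighbors of `[p,q]` and `[r,s]` in the Farey graph are exactly the two vertices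
`[(p+r)/2, (q+s)/2]` and `[(p-r)/2, (q-s)/2]`, and these two vertices are adjacent. -/
theorem farey_common_neighbors_of_det_two (p q r s : ℤ)
    (hpq : IsCoprime p q) (hrs : IsCoprime r s) (h : |p * s - q * r| = 2) :
    (2 ∣ p + r) ∧ (2 ∣ q + s) ∧ (2 ∣ p - r) ∧ (2 ∣ q - s) ∧
    ∃ (h₁ : IsCoprime ((p + r) / 2) ((q + s) / 2))
      (h₂ : IsCoprime ((p - r) / 2) ((q - s) / 2)),
      {w : FareyVertex | FareyGraph.Adj (fareyMk p q hpq) w ∧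
          FareyGraph.Adj (fareyMk r s hrs) w} =
        {fareyMk ((p + r) / 2) ((q + s) / 2) h₁,
         fareyMk ((p - r) / 2) ((q - s) / 2) h₂} ∧
      FareyGraph.Adj (fareyMk ((p + r) / 2) ((q + s) / 2) h₁)
        (fareyMk ((p - r) / 2) ((q - s) / 2) h₂) := by
  have h2u : ¬ IsUnit (2:ℤ) := by norm_num [Int.isUnit_iff]
  have hp2 : ¬((2:ℤ) ∣ p ∧ (2:ℤ) ∣ q) := fun ⟨h1, h2⟩ => h2u (hpq.isUnit_of_dvd' h1 h2)
  have hr2 : ¬((2:ℤ) ∣ r ∧ (2:ℤ) ∣ s) := fun ⟨h1, h2⟩ => h2u (hrs.isUnit_of_dvd' h1 h2)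
  have hdvd : (2:ℤ) ∣ p * s - q * r := by
    rcases (abs_eq (by norm_num : (0:ℤ) ≤ 2)).mp h with h' | h'
    · exact ⟨1, by linarith⟩
    · exact ⟨-1, by linarith⟩
  have key : ∀ a b c d : ZMod 2, a * d - b * c = 0 → ¬(a = 0 ∧ b = 0) → ¬(c = 0 ∧ d = 0) →
      a = c ∧ b = d := by decide
  have hcast : ((p : ZMod 2)) * s - q * r = 0 := by
    have := (ZMod.intCast_zmod_eq_zero_iff_dvd (p * s - q * r) 2).mpr hdvd
    push_cast at this
    exact this
  have hp2' : ¬((p : ZMod 2) = 0 ∧ (q : ZMod 2) = 0) := by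
    simp only [ZMod.intCast_zmod_eq_zero_iff_dvd]
    exact_mod_cast hp2
  have hr2' : ¬((r : ZMod 2) = 0 ∧ (s : ZMod 2) = 0) := by
    simp only [ZMod.intCast_zmod_eq_zero_iff_dvd]
    exact_mod_cast hr2
  obtain ⟨hpr, hqs⟩ := key p q r s hcast hp2' hr2'
  have hd3 : (2:ℤ) ∣ p - r := by
    have : ((p - r : ℤ) : ZMod 2) = 0 := by push_cast; rw [hpr]; ring
    exact (ZMod.intCast_zmod_eq_zero_iff_dvd _ 2).mp this
  have hd4 : (2:ℤ) ∣ q - s := by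
    have : ((q - s : ℤ) : ZMod 2) = 0 := by push_cast; rw [hqs]; ring
    exact (ZMod.intCast_zmod_eq_zero_iff_dvd _ 2).mp this
  have hd1 : (2:ℤ) ∣ p + r := by omega
  have hd2 : (2:ℤ) ∣ q + s := by omega
  set A := (p + r) / 2 with hA
  set B := (q + s) / 2 with hB
  set C := (p - r) / 2 with hC
  set D := (q - s) / 2 with hD
  have hAe : 2 * A = p + r := Int.mul_ediv_cancel' hd1
  have hBe : 2 * B = q + s := Int.mul_ediv_cancel' hd2
  have hCe : 2 * C = p - r := Int.mul_ediv_cancel' hd3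
  have hDe : 2 * D = q - s := Int.mul_ediv_cancel' hd4
  have hp' : p = A + C := by omega
  have hq' : q = B + D := by omega
  have hr' : r = A - C := by omega
  have hs' : s = B - D := by omega
  have hdet : |A * D - B * C| = 1 := by
    have h1 : p * s - q * r = 2 * (B * C - A * D) := by rw [hp', hq', hr', hs']; ring
    rw [h1] at h
    rw [abs_mul] at h
    have : |B * C - A * D| = 1 := by
      have h2 : |(2:ℤ)| = 2 := by norm_num
      rw [h2] at h; omega
    rw [show A * D - B * C = -(B * C - A * D) from by ring, abs_neg]
    exact this
  have hdet' : |B * C - A * D| = 1 := by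
    rw [show B * C - A * D = -(A * D - B * C) from by ring, abs_neg]; exact hdet
  have he2 : (A * D - B * C) * (A * D - B * C) = 1 := by
    rcases (abs_eq (by norm_num : (0:ℤ) ≤ 1)).mp hdet with h' | h' <;> rw [h'] <;> norm_num
  have h₁ : IsCoprime A B := coprime_of_det A B C D hdet
  have h₂ : IsCoprime C D := coprime_of_det C D A B (by
    rw [show C * B - D * A = -(A * D - B * C) from by ring, abs_neg]; exact hdet)
  refine ⟨hd1, hd2, hd3, hd4, h₁, h₂, ?_, ?_⟩
  · refine Set.ext fun w => Quotient.inductionOn w fun z => ?_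
    obtain ⟨⟨x, y⟩, hxy⟩ := z
    simp only [Set.mem_setOf_eq, Set.mem_insert_iff, Set.mem_singleton_iff]
    constructor
    · rintro ⟨hw1, hw2⟩
      have hw1' : |p * y - q * x| = 1 := hw1
      have hw2' : |r * y - s * x| = 1 := hw2
      have e1 : 2 * (A * y - B * x) = (p * y - q * x) + (r * y - s * x) := by
        rw [hp', hq', hr', hs']; ring
      have e2 : 2 * (C * y - D * x) = (p * y - q * x) - (r * y - s * x) := by
        rw [hp', hq', hr', hs']; ring
      have hα := (abs_eq (by norm_num : (0:ℤ) ≤ 1)).mp hw1'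
      have hβ := (abs_eq (by norm_num : (0:ℤ) ≤ 1)).mp hw2'
      have hee := (abs_eq (by norm_num : (0:ℤ) ≤ 1)).mp hdet
      rcases hα with hα | hα <;> rcases hβ with hβ | hβ
      · -- α = β = 1 : second vertex
        have hu : A * y - B * x = 1 := by linarith
        have hv : C * y - D * x = 0 := by linarith
        obtain ⟨hx, hy⟩ := cramer_aux A B C D x y 1 he2 hu hv
        right
        rcases hee with he | he <;> rw [he] at hx hy <;> norm_num at hx hy
        · exact Quotient.sound (Or.inl (by rw [Prod.ext_iff]; exact ⟨hx, hy⟩))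
        · exact Quotient.sound (Or.inr (by rw [Prod.ext_iff]; simp [hx, hy]))
      · -- α = 1, β = -1 : first vertex
        have hu : C * y - D * x = 1 := by linarith
        have hv : A * y - B * x = 0 := by linarith
        obtain ⟨hx, hy⟩ := cramer_aux C D A B x y 1 (by linear_combination he2) hu hv
        left
        have hcb : C * B - D * A = -(A * D - B * C) := by ring
        rw [hcb] at hx hy
        rcases hee with he | he <;> rw [he] at hx hy <;> norm_num at hx hy
        · exact Quotient.sound (Or.inr (by rw [Prod.ext_iff]; simp [hx, hy]))
        · exact Quotient.sound (Or.inl (by rw [Prod.ext_iff]; exact ⟨hx, hy⟩))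
      · -- α = -1, β = 1 : first vertex
        have hu : C * y - D * x = -1 := by linarith
        have hv : A * y - B * x = 0 := by linarith
        obtain ⟨hx, hy⟩ := cramer_aux C D A B x y (-1) (by linear_combination he2) hu hv
        left
        have hcb : C * B - D * A = -(A * D - B * C) := by ring
        rw [hcb] at hx hy
        rcases hee with he | he <;> rw [he] at hx hy <;> norm_num at hx hy
        · exact Quotient.sound (Or.inl (by rw [Prod.ext_iff]; exact ⟨hx, hy⟩))
        · exact Quotient.sound (Or.inr (by rw [Prod.ext_iff]; simp [hx, hy]))
      · -- α = β = -1 : second vertex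
        have hu : A * y - B * x = -1 := by linarith
        have hv : C * y - D * x = 0 := by linarith
        obtain ⟨hx, hy⟩ := cramer_aux A B C D x y (-1) he2 hu hv
        right
        rcases hee with he | he <;> rw [he] at hx hy <;> norm_num at hx hy
        · exact Quotient.sound (Or.inr (by rw [Prod.ext_iff]; simp [hx, hy]))
        · exact Quotient.sound (Or.inl (by rw [Prod.ext_iff]; exact ⟨hx, hy⟩))
    · rintro (hw | hw) <;> rw [hw] <;> constructor
      · show |p * B - q * A| = 1
        rw [show p * B - q * A = B * C - A * D from by rw [hp', hq']; ring]
        exact hdet'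
      · show |r * B - s * A| = 1
        rw [show r * B - s * A = -(B * C - A * D) from by rw [hr', hs']; ring, abs_neg]
        exact hdet'
      · show |p * D - q * C| = 1
        rw [show p * D - q * C = A * D - B * C from by rw [hp', hq']; ring]
        exact hdet
      · show |r * D - s * C| = 1
        rw [show r * D - s * C = A * D - B * C from by rw [hr', hs']; ring]
        exact hdet
  · exact hdet
end

section
/- Let u and v be non-adjacent vertices of the Farey graph that have two distinct common neighbors c₁ and c₂ (so u, c₁, v, c₂ span a quadrilateral consisting of two quadrilateral triples with outer points u and v and central points c₁ and c₂). Then every walk in the Farey graph from u to v passes through c₁ or through c₂; that is, removing the two vertices c₁ and c₂ from the Farey graph disconnects u from v. -/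
namespace FareySep

/-- Determinant of two Farey pairs. -/
def Dp (a b : FareyPair) : ℤ := a.1.1 * b.1.2 - a.1.2 * b.1.1

lemma eqv_of_Dp_zero (a b : FareyPair) (h : Dp a b = 0) : a.1 = b.1 ∨ a.1 = -b.1 := by
  obtain ⟨x, y, hxy⟩ := a.2
  have h' : a.1.1 * b.1.2 - a.1.2 * b.1.1 = 0 := h
  set t := x * b.1.1 + y * b.1.2 with ht
  have hb1 : b.1.1 = t * a.1.1 := by rw [ht]; linear_combination (-y) * h' + (- b.1.1) * hxy
  have hb2 : b.1.2 = t * a.1.2 := by rw [ht]; linear_combination x * h' + (- b.1.2) * hxy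
  have hu : IsUnit t := b.2.isUnit_of_dvd' ⟨a.1.1, hb1⟩ ⟨a.1.2, hb2⟩
  rcases Int.isUnit_iff.mp hu with h1 | h1
  · left
    exact Prod.ext_iff.mpr ⟨by rw [hb1, h1, one_mul], by rw [hb2, h1, one_mul]⟩
  · right
    refine Prod.ext_iff.mpr ⟨?_, ?_⟩
    · show a.1.1 = -b.1.1; rw [hb1, h1]; ring
    · show a.1.2 = -b.1.2; rw [hb2, h1]; ring

lemma sign_step (p q w w' : FareyPair) (hpq : Dp p q * Dp p q = 1)
    (hww' : |Dp w w'| = 1)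
    (h1 : Dp w p ≠ 0) (h2 : Dp w q ≠ 0) (h3 : Dp w' p ≠ 0) (h4 : Dp w' q ≠ 0) :
    0 < (Dp w p * Dp w q) * (Dp w' p * Dp w' q) := by
  have plucker : Dp w w' * Dp p q = Dp w p * Dp w' q - Dp w q * Dp w' p := by
    simp only [Dp]; ring
  have hpq1 : |Dp p q| = 1 := by
    rcases Int.isUnit_iff.mp (IsUnit.of_mul_eq_one _ hpq) with h | h <;> simp [h]
  have habs : |Dp w p * Dp w' q - Dp w q * Dp w' p| = 1 := by
    rw [← plucker, abs_mul, hww', one_mul, hpq1]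
  rcases lt_trichotomy ((Dp w p * Dp w q) * (Dp w' p * Dp w' q)) 0 with hlt | heq | hgt
  · exfalso
    set s := Dp w p * Dp w' q with hs
    set t := Dp w q * Dp w' p with htt
    have hst : s * t < 0 := by
      have hrw : s * t = (Dp w p * Dp w q) * (Dp w' p * Dp w' q) := by rw [hs, htt]; ring
      linarith [hrw ▸ hlt]
    rcases mul_neg_iff.mp hst with ⟨hs1, ht1⟩ | ⟨hs1, ht1⟩ <;>
      rcases abs_eq (by norm_num : (0:ℤ) ≤ 1) |>.mp habs with h | h <;> omega
  · exfalso
    rcases mul_eq_zero.mp heq with h | h <;> rcases mul_eq_zero.mp h with h' | h' <;> simp_all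
  · exact hgt

/-- The sign invariant relative to the pair of centers `p`, `q`. -/
def Fsgn (p q : FareyPair) : FareyVertex → ℤ :=
  Quotient.lift (fun w : FareyPair => Dp w p * Dp w q) (by
    rintro a b (h | h)
    · simp only [Dp, h]
    · simp only [Dp, h, Prod.fst_neg, Prod.snd_neg]; ring)

lemma Fsgn_ne_zero (p q : FareyPair) (w : FareyPair)
    (hp : (⟦p⟧ : FareyVertex) ≠ ⟦w⟧) (hq : (⟦q⟧ : FareyVertex) ≠ ⟦w⟧) :
    Dp w p ≠ 0 ∧ Dp w q ≠ 0 := by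
  constructor
  · intro h0
    exact hp (Quotient.sound (eqv_of_Dp_zero w p h0)).symm
  · intro h0
    exact hq (Quotient.sound (eqv_of_Dp_zero w q h0)).symm

lemma walk_pos (p q : FareyPair) (hpq : Dp p q * Dp p q = 1) :
    ∀ {s t : FareyVertex} (W : FareyGraph.Walk s t),
      (⟦p⟧ : FareyVertex) ∉ W.support → (⟦q⟧ : FareyVertex) ∉ W.support →
      0 < Fsgn p q s * Fsgn p q t := by
  intro s t W
  induction W with
  | nil =>
    rename_i u
    intro hp hq
    simp only [SimpleGraph.Walk.support_nil, List.mem_singleton] at hp hq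
    obtain ⟨a, rfl⟩ := Quotient.exists_rep u
    obtain ⟨h1, h2⟩ := Fsgn_ne_zero p q a hp hq
    have e1 : Fsgn p q (⟦a⟧ : FareyVertex) = Dp a p * Dp a q := rfl
    rw [e1]
    exact mul_self_pos.mpr (mul_ne_zero h1 h2)
  | @cons x y z hadj0 W ih =>
    intro hp hq
    simp only [SimpleGraph.Walk.support_cons, List.mem_cons] at hp hq
    push_neg at hp hq
    have hmid := ih hp.2 hq.2
    have hpy : (⟦p⟧ : FareyVertex) ≠ y := fun e => hp.2 (e ▸ SimpleGraph.Walk.start_mem_support W)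
    have hqy : (⟦q⟧ : FareyVertex) ≠ y := fun e => hq.2 (e ▸ SimpleGraph.Walk.start_mem_support W)
    obtain ⟨a, rfl⟩ := Quotient.exists_rep x
    obtain ⟨b, rfl⟩ := Quotient.exists_rep y
    obtain ⟨h1, h2⟩ := Fsgn_ne_zero p q a hp.1 hq.1
    obtain ⟨h3, h4⟩ := Fsgn_ne_zero p q b hpy hqy
    have hadj : |Dp a b| = 1 := hadj0
    have hstep := sign_step p q a b hpq hadj h1 h2 h3 h4
    have e1 : Fsgn p q (⟦a⟧ : FareyVertex) = Dp a p * Dp a q := rfl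
    have e2 : Fsgn p q (⟦b⟧ : FareyVertex) = Dp b p * Dp b q := rfl
    rw [e1]
    rw [e2] at hmid
    nlinarith [hstep, hmid, sq_nonneg (Dp b p * Dp b q)]

lemma final_coords (a1 a2 b1 b2 p1 p2 q1 q2 : ℤ)
    (hpq : (p1*q2 - p2*q1) * (p1*q2 - p2*q1) = 1)
    (hap : (a1*p2 - a2*p1) * (a1*p2 - a2*p1) = 1)
    (hbp : (b1*p2 - b2*p1) * (b1*p2 - b2*p1) = 1)
    (hF : (a1*p2 - a2*p1) * (a1*q2 - a2*q1) = (b1*p2 - b2*p1) * (b1*q2 - b2*q1)) :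
    a1 = ((a1*p2 - a2*p1) * (b1*p2 - b2*p1)) * b1 ∧
    a2 = ((a1*p2 - a2*p1) * (b1*p2 - b2*p1)) * b2 := by
  constructor
  · linear_combination (-a1 + (a1*p2 - a2*p1)*(b1*p2 - b2*p1)*b1) * hpq
      + (-(p1*q2 - p2*q1)*p1*(a1*q2 - a2*q1)) * hap
      + ((p1*q2 - p2*q1)*p1*(a1*p2 - a2*p1)) * hF
      + ((p1*q2 - p2*q1)*q1*(a1*p2 - a2*p1)) * hbp
  · linear_combination (-a2 + (a1*p2 - a2*p1)*(b1*p2 - b2*p1)*b2) * hpq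
      + (-(p1*q2 - p2*q1)*p2*(a1*q2 - a2*q1)) * hap
      + ((p1*q2 - p2*q1)*p2*(a1*p2 - a2*p1)) * hF
      + ((p1*q2 - p2*q1)*q2*(a1*p2 - a2*p1)) * hbp

end FareySep

open FareySep in
/-- Let `u` and `v` be distinct non-adjacent vertices of the Farey
graph with two distinct common neighbors `c₁` and `c₂` (so `u, c₁, v, c₂` span a
quadrilateral).  Then every walk in the Farey graph from `u` to `v` passes through
`c₁` or through `c₂`. -/
theorem farey_quadrilateral_separates (u v c₁ c₂ : FareyVertex)
    (hne : u ≠ v) (huv : ¬ FareyGraph.Adj u v) (hc : c₁ ≠ c₂)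
    (h₁u : FareyGraph.Adj u c₁) (h₁v : FareyGraph.Adj v c₁)
    (h₂u : FareyGraph.Adj u c₂) (h₂v : FareyGraph.Adj v c₂) :
    ∀ W : FareyGraph.Walk u v, c₁ ∈ W.support ∨ c₂ ∈ W.support := by
  intro W
  by_contra hcon
  push_neg at hcon
  obtain ⟨hsupp1, hsupp2⟩ := hcon
  obtain ⟨a, rfl⟩ := Quotient.exists_rep u
  obtain ⟨b, rfl⟩ := Quotient.exists_rep v
  obtain ⟨p, rfl⟩ := Quotient.exists_rep c₁
  obtain ⟨q, rfl⟩ := Quotient.exists_rep c₂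
  have hap : |Dp a p| = 1 := h₁u
  have hbp : |Dp b p| = 1 := h₁v
  have haq : |Dp a q| = 1 := h₂u
  have hbq : |Dp b q| = 1 := h₂v
  have hpq0 : Dp p q ≠ 0 := fun h0 => hc (Quotient.sound (eqv_of_Dp_zero p q h0))
  have hab0 : Dp a b ≠ 0 := fun h0 => hne (Quotient.sound (eqv_of_Dp_zero a b h0))
  have hab1 : ¬ (|Dp a b| = 1) := huv
  have plucker : Dp a b * Dp p q = Dp a p * Dp b q - Dp a q * Dp b p := by
    simp only [Dp]; ring
  have hprod : |Dp a b| * |Dp p q| ≤ 2 := by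
    rw [← abs_mul, plucker]
    calc |Dp a p * Dp b q - Dp a q * Dp b p|
        ≤ |Dp a p * Dp b q| + |Dp a q * Dp b p| := abs_sub _ _
      _ = 2 := by rw [abs_mul, abs_mul, hap, hbq, haq, hbp]; norm_num
  have hA2 : 2 ≤ |Dp a b| := by
    have := abs_nonneg (Dp a b)
    have h0 : |Dp a b| ≠ 0 := fun h => hab0 (abs_eq_zero.mp h)
    omega
  have hB1 : 1 ≤ |Dp p q| := by
    have := abs_nonneg (Dp p q)
    have h0 : |Dp p q| ≠ 0 := fun h => hpq0 (abs_eq_zero.mp h)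
    omega
  have hBeq : |Dp p q| = 1 := by nlinarith [hprod, hA2, hB1]
  have hpq2 : Dp p q * Dp p q = 1 := by
    rcases (abs_eq (by norm_num : (0:ℤ) ≤ 1)).mp hBeq with h | h <;> rw [h] <;> norm_num
  have hpos := walk_pos p q hpq2 W hsupp1 hsupp2
  have e1 : Fsgn p q (⟦a⟧ : FareyVertex) = Dp a p * Dp a q := rfl
  have e2 : Fsgn p q (⟦b⟧ : FareyVertex) = Dp b p * Dp b q := rfl
  rw [e1, e2] at hpos
  have hF : Dp a p * Dp a q = Dp b p * Dp b q := by
    rcases (abs_eq (by norm_num : (0:ℤ) ≤ 1)).mp hap with ha1 | ha1 <;>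
      rcases (abs_eq (by norm_num : (0:ℤ) ≤ 1)).mp haq with ha2 | ha2 <;>
        rcases (abs_eq (by norm_num : (0:ℤ) ≤ 1)).mp hbp with ha3 | ha3 <;>
          rcases (abs_eq (by norm_num : (0:ℤ) ≤ 1)).mp hbq with ha4 | ha4 <;>
            rw [ha1, ha2, ha3, ha4] at hpos ⊢ <;> (norm_num at hpos) <;> norm_num
  have hap2 : Dp a p * Dp a p = 1 := by
    rcases (abs_eq (by norm_num : (0:ℤ) ≤ 1)).mp hap with h | h <;> rw [h] <;> norm_num
  have hbp2 : Dp b p * Dp b p = 1 := by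
    rcases (abs_eq (by norm_num : (0:ℤ) ≤ 1)).mp hbp with h | h <;> rw [h] <;> norm_num
  have hDap : Dp a p = a.1.1 * p.1.2 - a.1.2 * p.1.1 := rfl
  have hDaq : Dp a q = a.1.1 * q.1.2 - a.1.2 * q.1.1 := rfl
  have hDbp : Dp b p = b.1.1 * p.1.2 - b.1.2 * p.1.1 := rfl
  have hDbq : Dp b q = b.1.1 * q.1.2 - b.1.2 * q.1.1 := rfl
  have hDpq : Dp p q = p.1.1 * q.1.2 - p.1.2 * q.1.1 := rfl
  simp only [Dp] at hF hap2 hbp2 hpq2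
  obtain ⟨hc1, hc2⟩ := final_coords a.1.1 a.1.2 b.1.1 b.1.2 p.1.1 p.1.2 q.1.1 q.1.2
    hpq2 hap2 hbp2 hF
  set sgn := (a.1.1 * p.1.2 - a.1.2 * p.1.1) * (b.1.1 * p.1.2 - b.1.2 * p.1.1) with hsgn
  have hsq : sgn * sgn = 1 := by
    rw [hsgn]
    linear_combination
      ((b.1.1 * p.1.2 - b.1.2 * p.1.1) * (b.1.1 * p.1.2 - b.1.2 * p.1.1)) * hap2 + hbp2
  rcases Int.isUnit_iff.mp (IsUnit.of_mul_eq_one _ hsq) with h | h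
  · refine hne (Quotient.sound (Or.inl ?_))
    rw [h] at hc1 hc2
    exact Prod.ext_iff.mpr ⟨by omega, by omega⟩
  · refine hne (Quotient.sound (Or.inr ?_))
    rw [h] at hc1 hc2
    refine Prod.ext_iff.mpr ⟨?_, ?_⟩
    · show a.1.1 = -b.1.1; omega
    · show a.1.2 = -b.1.2; omega
end
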